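/- Let S be a set of pairs of positive integers (a matrix form's set of support entries), let (m_k)_{k≥1} be a strictly increasing sequence of positive integers, and let δ be a real number such that (#{(a,b) : 1 ≤ a,b ≤ k, (m_a, m_b) ∈ S})/k² → δ as k → ∞. Then there exists a bijection π of the positive integers such that (#{(i,j) : 1 ≤ i,j ≤ N, (π(i), π(j)) ∈ S})/N² → δ as N → ∞. -/

import Mathlib

open Filter

private lemma box_finite (N : ℕ) :
    {p : ℕ+ × ℕ+ | (p.1 : ℕ) ≤ N ∧ (p.2 : ℕ) ≤ N}.Finite := by
  have hinj : Function.Injective (fun p : ℕ+ × ℕ+ => ((p.1 : ℕ), (p.2 : ℕ))) := by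
    intro p q h
    simp only [Prod.mk.injEq] at h
    exact Prod.ext (PNat.coe_injective h.1) (PNat.coe_injective h.2)
  have hsub : {p : ℕ+ × ℕ+ | (p.1 : ℕ) ≤ N ∧ (p.2 : ℕ) ≤ N} ⊆
      (fun p : ℕ+ × ℕ+ => ((p.1 : ℕ), (p.2 : ℕ))) ⁻¹' (Set.Iic N ×ˢ Set.Iic N) := by
    intro p hp; exact ⟨hp.1, hp.2⟩
  exact (((Set.finite_Iic N).prod (Set.finite_Iic N)).preimage hinj.injOn).subset hsub

private lemma strip1_card (N : ℕ) :
    {p : ℕ+ × ℕ+ | ((p.1 : ℕ) ≤ N ∧ (p.2 : ℕ) ≤ N) ∧ ∃ t : ℕ+, t * t = p.1}.ncard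
      ≤ Nat.sqrt N * N := by
  have := Set.ncard_le_ncard_of_injOn
    (f := fun p : ℕ+ × ℕ+ => (Nat.sqrt (p.1 : ℕ), (p.2 : ℕ)))
    (s := {p : ℕ+ × ℕ+ | ((p.1 : ℕ) ≤ N ∧ (p.2 : ℕ) ≤ N) ∧ ∃ t : ℕ+, t * t = p.1})
    (t := ↑((Finset.Icc 1 (Nat.sqrt N)) ×ˢ (Finset.Icc 1 N)))
    (by
      rintro ⟨a, b⟩ ⟨⟨haN, hbN⟩, t, ht⟩
      have hat : (a : ℕ) = (t : ℕ) * (t : ℕ) := by rw [← PNat.mul_coe, ht]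
      simp only [Finset.mem_coe, Finset.mem_product, Finset.mem_Icc]
      refine ⟨⟨?_, ?_⟩, b.2, hbN⟩
      · rw [hat, Nat.sqrt_eq]; exact t.2
      · rw [hat, Nat.sqrt_eq]; exact Nat.le_sqrt.2 (by rw [← hat]; exact haN))
    (by
      rintro ⟨a, b⟩ ⟨⟨haN, hbN⟩, t, ht⟩ ⟨a', b'⟩ ⟨⟨haN', hbN'⟩, t', ht'⟩ h
      simp only [Prod.mk.injEq] at h
      have hat : (a : ℕ) = (t : ℕ) * (t : ℕ) := by rw [← PNat.mul_coe, ht]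
      have hat' : (a' : ℕ) = (t' : ℕ) * (t' : ℕ) := by rw [← PNat.mul_coe, ht']
      have h1 : (t : ℕ) = (t' : ℕ) := by
        have := h.1; rwa [hat, hat', Nat.sqrt_eq, Nat.sqrt_eq] at this
      refine Prod.ext (PNat.coe_injective ?_) (PNat.coe_injective h.2)
      rw [hat, hat', h1])
    (Set.toFinite _)
  rw [Set.ncard_coe_finset, Finset.card_product, Nat.card_Icc, Nat.card_Icc] at this
  simpa using this

private lemma strip2_card (N : ℕ) :
    {p : ℕ+ × ℕ+ | ((p.1 : ℕ) ≤ N ∧ (p.2 : ℕ) ≤ N) ∧ ∃ t : ℕ+, t * t = p.2}.ncard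
      ≤ Nat.sqrt N * N := by
  have := Set.ncard_le_ncard_of_injOn
    (f := fun p : ℕ+ × ℕ+ => (Nat.sqrt (p.2 : ℕ), (p.1 : ℕ)))
    (s := {p : ℕ+ × ℕ+ | ((p.1 : ℕ) ≤ N ∧ (p.2 : ℕ) ≤ N) ∧ ∃ t : ℕ+, t * t = p.2})
    (t := ↑((Finset.Icc 1 (Nat.sqrt N)) ×ˢ (Finset.Icc 1 N)))
    (by
      rintro ⟨a, b⟩ ⟨⟨haN, hbN⟩, t, ht⟩
      have hbt : (b : ℕ) = (t : ℕ) * (t : ℕ) := by rw [← PNat.mul_coe, ht]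
      simp only [Finset.mem_coe, Finset.mem_product, Finset.mem_Icc]
      refine ⟨⟨?_, ?_⟩, a.2, haN⟩
      · rw [hbt, Nat.sqrt_eq]; exact t.2
      · rw [hbt, Nat.sqrt_eq]; exact Nat.le_sqrt.2 (by rw [← hbt]; exact hbN))
    (by
      rintro ⟨a, b⟩ ⟨⟨haN, hbN⟩, t, ht⟩ ⟨a', b'⟩ ⟨⟨haN', hbN'⟩, t', ht'⟩ h
      simp only [Prod.mk.injEq] at h
      have hbt : (b : ℕ) = (t : ℕ) * (t : ℕ) := by rw [← PNat.mul_coe, ht]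
      have hbt' : (b' : ℕ) = (t' : ℕ) * (t' : ℕ) := by rw [← PNat.mul_coe, ht']
      have h1 : (t : ℕ) = (t' : ℕ) := by
        have := h.1; rwa [hbt, hbt', Nat.sqrt_eq, Nat.sqrt_eq] at this
      refine Prod.ext (PNat.coe_injective h.2) (PNat.coe_injective ?_)
      rw [hbt, hbt', h1])
    (Set.toFinite _)
  rw [Set.ncard_coe_finset, Finset.card_product, Nat.card_Icc, Nat.card_Icc] at this
  simpa using this

/-- Let `S` be a set of pairs of positive integers (the support entries of
a matrix form), and let `(m k)_{k ≥ 1}` be a strictly increasing sequence of positive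
integers such that the density of `S` along the subsequence `(m k)`,
`#{(a, b) : 1 ≤ a, b ≤ k, (m a, m b) ∈ S} / k²`, tends to `δ`.  Then there is a bijection `π`
of the positive integers relative to which `S` has support density `δ`. -/
theorem density_of_permuted_form
    (S : Set (ℕ+ × ℕ+)) (m : ℕ+ → ℕ+) (hm : StrictMono m) (δ : ℝ)
    (hδ : Tendsto (fun k : ℕ =>
        ((Set.ncard {p : ℕ+ × ℕ+ | (p.1 : ℕ) ≤ k ∧ (p.2 : ℕ) ≤ k ∧ (m p.1, m p.2) ∈ S}) : ℝ)
          / (k : ℝ) ^ 2)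
      atTop (nhds δ)) :
    ∃ π : ℕ+ ≃ ℕ+,
      Tendsto (fun N : ℕ =>
        ((Set.ncard {p : ℕ+ × ℕ+ | (p.1 : ℕ) ≤ N ∧ (p.2 : ℕ) ≤ N ∧ (π p.1, π p.2) ∈ S}) : ℝ)
          / (N : ℝ) ^ 2)
      atTop (nhds δ) := by
  classical
  -- the set of squares and its complement
  set Sq : Set ℕ+ := Set.range (fun t : ℕ+ => t * t) with hSq
  have hsq_inj : Function.Injective (fun t : ℕ+ => t * t) := by
    intro a b h
    apply PNat.coe_injective
    have : ((a : ℕ) * a) = (b : ℕ) * b := by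
      have := congrArg (PNat.val) h; simpa [PNat.mul_coe] using this
    exact Nat.mul_self_inj.mp this
  have hSq_inf : Sq.Infinite := Set.infinite_range_of_injective hsq_inj
  set D : Set ℕ+ := Sqᶜ with hD
  set T : Set ℕ+ := m '' D with hT
  -- the complement of T is infinite
  have hTc_inf : (Tᶜ).Infinite := by
    have h1 : (m '' Sq).Infinite := hSq_inf.image (hm.injective.injOn)
    refine h1.mono ?_
    rintro x ⟨s, hs, rfl⟩ ⟨d, hd, hmd⟩
    exact hd (hm.injective hmd ▸ hs)
  -- build the permutation
  set e : {x : ℕ+ // x ∈ D} ≃ {x : ℕ+ // x ∈ T} := Equiv.Set.image m D hm.injective with he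
  haveI : Infinite {x : ℕ+ // x ∈ Sq} := Set.infinite_coe_iff.2 hSq_inf
  haveI : Infinite {x : ℕ+ // ¬ x ∈ D} := by
    refine Infinite.of_injective
      (fun s : {x : ℕ+ // x ∈ Sq} => (⟨s.1, not_not.2 s.2⟩ : {x : ℕ+ // ¬ x ∈ D})) ?_
    intro a b h; exact Subtype.ext (by simpa using congrArg Subtype.val h)
  haveI : Infinite {x : ℕ+ // x ∈ Tᶜ} := Set.infinite_coe_iff.2 hTc_inf
  haveI : Infinite {x : ℕ+ // ¬ x ∈ T} := by
    refine Infinite.of_injective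
      (fun s : {x : ℕ+ // x ∈ Tᶜ} => (⟨s.1, s.2⟩ : {x : ℕ+ // ¬ x ∈ T})) ?_
    intro a b h; exact Subtype.ext (by simpa using congrArg Subtype.val h)
  obtain ⟨f⟩ : Nonempty ({x : ℕ+ // ¬ x ∈ D} ≃ {x : ℕ+ // ¬ x ∈ T}) :=
    nonempty_equiv_of_countable
  set π : ℕ+ ≃ ℕ+ := Equiv.subtypeCongr e f with hπ
  have key : ∀ i : ℕ+, i ∈ D → π i = m i := by
    intro i hi
    simp only [hπ, Equiv.subtypeCongr, Equiv.trans_apply,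
      Equiv.sumCompl_symm_apply_of_pos hi, Equiv.sumCongr_apply, Sum.map_inl,
      Equiv.sumCompl_apply_inl]
    rfl
  refine ⟨π, ?_⟩
  -- counting sets
  show Tendsto (fun N : ℕ =>
      ((Set.ncard {p : ℕ+ × ℕ+ | (p.1 : ℕ) ≤ N ∧ (p.2 : ℕ) ≤ N ∧ (π p.1, π p.2) ∈ S}) : ℝ)
        / (N : ℝ) ^ 2) atTop (nhds δ)
  set Aπ : ℕ → Set (ℕ+ × ℕ+) := fun N =>
    {p : ℕ+ × ℕ+ | (p.1 : ℕ) ≤ N ∧ (p.2 : ℕ) ≤ N ∧ (π p.1, π p.2) ∈ S} with hAπ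
  set Am : ℕ → Set (ℕ+ × ℕ+) := fun N =>
    {p : ℕ+ × ℕ+ | (p.1 : ℕ) ≤ N ∧ (p.2 : ℕ) ≤ N ∧ (m p.1, m p.2) ∈ S} with hAm
  set E1 : ℕ → Set (ℕ+ × ℕ+) := fun N =>
    {p : ℕ+ × ℕ+ | ((p.1 : ℕ) ≤ N ∧ (p.2 : ℕ) ≤ N) ∧ ∃ t : ℕ+, t * t = p.1} with hE1
  set E2 : ℕ → Set (ℕ+ × ℕ+) := fun N =>
    {p : ℕ+ × ℕ+ | ((p.1 : ℕ) ≤ N ∧ (p.2 : ℕ) ≤ N) ∧ ∃ t : ℕ+, t * t = p.2} with hE2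
  have hfin : ∀ N, (Aπ N ∪ (E1 N ∪ E2 N)).Finite ∧ (Am N ∪ (E1 N ∪ E2 N)).Finite := by
    intro N
    constructor <;>
    · refine (box_finite N).subset ?_
      rintro p (hp | hp | hp)
      exacts [⟨hp.1, hp.2.1⟩, ⟨hp.1.1, hp.1.2⟩, ⟨hp.1.1, hp.1.2⟩]
  -- transfer of membership
  have hswap : ∀ N (p : ℕ+ × ℕ+), (p.1 : ℕ) ≤ N → (p.2 : ℕ) ≤ N →
      p ∉ E1 N → p ∉ E2 N → ((π p.1, π p.2) ∈ S ↔ (m p.1, m p.2) ∈ S) := by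
    intro N p h1 h2 he1 he2
    have hp1 : p.1 ∈ D := by
      intro hp1
      obtain ⟨t, ht⟩ := hp1
      exact he1 ⟨⟨h1, h2⟩, t, ht⟩
    have hp2 : p.2 ∈ D := by
      intro hp2
      obtain ⟨t, ht⟩ := hp2
      exact he2 ⟨⟨h1, h2⟩, t, ht⟩
    rw [key _ hp1, key _ hp2]
  have hsub1 : ∀ N, Aπ N ⊆ Am N ∪ (E1 N ∪ E2 N) := by
    intro N p hp
    by_cases he1 : p ∈ E1 N
    · exact Or.inr (Or.inl he1)
    by_cases he2 : p ∈ E2 N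
    · exact Or.inr (Or.inr he2)
    exact Or.inl ⟨hp.1, hp.2.1, (hswap N p hp.1 hp.2.1 he1 he2).1 hp.2.2⟩
  have hsub2 : ∀ N, Am N ⊆ Aπ N ∪ (E1 N ∪ E2 N) := by
    intro N p hp
    by_cases he1 : p ∈ E1 N
    · exact Or.inr (Or.inl he1)
    by_cases he2 : p ∈ E2 N
    · exact Or.inr (Or.inr he2)
    exact Or.inl ⟨hp.1, hp.2.1, (hswap N p hp.1 hp.2.1 he1 he2).2 hp.2.2⟩
  have hErr : ∀ N, (E1 N ∪ E2 N).ncard ≤ 2 * (Nat.sqrt N * N) := by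
    intro N
    calc (E1 N ∪ E2 N).ncard ≤ (E1 N).ncard + (E2 N).ncard := Set.ncard_union_le _ _
    _ ≤ Nat.sqrt N * N + Nat.sqrt N * N := Nat.add_le_add (strip1_card N) (strip2_card N)
    _ = 2 * (Nat.sqrt N * N) := by ring
  have hcard1 : ∀ N, (Aπ N).ncard ≤ (Am N).ncard + 2 * (Nat.sqrt N * N) := by
    intro N
    calc (Aπ N).ncard ≤ (Am N ∪ (E1 N ∪ E2 N)).ncard :=
          Set.ncard_le_ncard (hsub1 N) (hfin N).2
    _ ≤ (Am N).ncard + (E1 N ∪ E2 N).ncard := Set.ncard_union_le _ _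
    _ ≤ (Am N).ncard + 2 * (Nat.sqrt N * N) := Nat.add_le_add_left (hErr N) _
  have hcard2 : ∀ N, (Am N).ncard ≤ (Aπ N).ncard + 2 * (Nat.sqrt N * N) := by
    intro N
    calc (Am N).ncard ≤ (Aπ N ∪ (E1 N ∪ E2 N)).ncard :=
          Set.ncard_le_ncard (hsub2 N) (hfin N).1
    _ ≤ (Aπ N).ncard + (E1 N ∪ E2 N).ncard := Set.ncard_union_le _ _
    _ ≤ (Aπ N).ncard + 2 * (Nat.sqrt N * N) := Nat.add_le_add_left (hErr N) _
  -- the error term tends to zero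
  have hsqrt_tendsto : Tendsto (fun N : ℕ => Real.sqrt N) atTop atTop := by
    rw [tendsto_atTop_atTop]
    intro b
    refine ⟨⌈b * b⌉₊, fun n hn => ?_⟩
    rcases le_or_gt b 0 with hb | hb
    · exact hb.trans (Real.sqrt_nonneg _)
    · have h1 : b * b ≤ (n : ℝ) := le_trans (Nat.le_ceil _) (by exact_mod_cast hn)
      calc b = Real.sqrt (b * b) := (Real.sqrt_mul_self hb.le).symm
      _ ≤ Real.sqrt n := Real.sqrt_le_sqrt h1
  have herr_tendsto : Tendsto (fun N : ℕ => 4 / Real.sqrt N) atTop (nhds 0) := by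
    have := hsqrt_tendsto.inv_tendsto_atTop
    have h4 : Tendsto (fun N : ℕ => 4 * (Real.sqrt N)⁻¹) atTop (nhds (4 * 0)) :=
      this.const_mul 4
    simpa [div_eq_mul_inv] using h4
  -- the difference of normalized counts tends to zero
  have hdiff : Tendsto (fun N : ℕ =>
      ((Aπ N).ncard : ℝ) / (N : ℝ) ^ 2 - ((Am N).ncard : ℝ) / (N : ℝ) ^ 2) atTop (nhds 0) := by
    refine squeeze_zero_norm' (a := fun N : ℕ => 4 / Real.sqrt N) ?_ herr_tendsto
    filter_upwards [eventually_ge_atTop 1] with N hN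
    have hN0 : (0 : ℝ) < (N : ℝ) := by exact_mod_cast hN
    have hsqrtN0 : (0 : ℝ) < Real.sqrt N := Real.sqrt_pos.2 hN0
    have hbound : |((Aπ N).ncard : ℝ) - ((Am N).ncard : ℝ)| ≤ 2 * (Nat.sqrt N * N) := by
      rw [abs_sub_le_iff]
      constructor
      · have := hcard1 N
        have : ((Aπ N).ncard : ℝ) ≤ ((Am N).ncard : ℝ) + 2 * (Nat.sqrt N * N) := by
          exact_mod_cast this
        linarith
      · have := hcard2 N
        have : ((Am N).ncard : ℝ) ≤ ((Aπ N).ncard : ℝ) + 2 * (Nat.sqrt N * N) := by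
          exact_mod_cast this
        linarith
    have hsqle : ((Nat.sqrt N : ℕ) : ℝ) ≤ Real.sqrt N := Real.nat_sqrt_le_real_sqrt
    calc ‖((Aπ N).ncard : ℝ) / (N : ℝ) ^ 2 - ((Am N).ncard : ℝ) / (N : ℝ) ^ 2‖
        = |((Aπ N).ncard : ℝ) - ((Am N).ncard : ℝ)| / (N : ℝ) ^ 2 := by
          rw [div_sub_div_same, Real.norm_eq_abs, abs_div,
            abs_of_pos (by positivity : (0:ℝ) < (N : ℝ) ^ 2)]
    _ ≤ ((2 * (Nat.sqrt N * N) : ℕ) : ℝ) / (N : ℝ) ^ 2 := by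
          gcongr
          exact_mod_cast hbound
    _ ≤ 4 / Real.sqrt N := by
          rw [div_le_div_iff₀ (by positivity) hsqrtN0]
          have hNsq : (N : ℝ) = Real.sqrt N * Real.sqrt N := (Real.mul_self_sqrt hN0.le).symm
          push_cast
          nlinarith [mul_le_mul_of_nonneg_right hsqle
            (by positivity : (0:ℝ) ≤ 2 * (N : ℝ) * Real.sqrt N), hN0, hsqrtN0]
  have hδ' : Tendsto (fun k : ℕ => ((Am k).ncard : ℝ) / (k : ℝ) ^ 2) atTop (nhds δ) := hδ
  have hsum := hδ'.add hdiff
  rw [add_zero] at hsum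
  have heq : (fun N : ℕ => ((Am N).ncard : ℝ) / (N : ℝ) ^ 2 +
      (((Aπ N).ncard : ℝ) / (N : ℝ) ^ 2 - ((Am N).ncard : ℝ) / (N : ℝ) ^ 2)) =
      fun N : ℕ => ((Aπ N).ncard : ℝ) / (N : ℝ) ^ 2 := by
    funext N; ring
  rw [heq] at hsum
  exact hsum
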